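/- Let G be a multipartite graph with maximum degree at most Δ, parts V_1,...,V_r each of size exactly 2s, and local degree at most d, where Δ is sufficiently large and d > (log Δ)^4. Then there exist subsets U_i ⊆ V_i, each of size exactly s, such that the subgraph of G induced by ∪U_i has maximum degree at most Δ/2 + Δ^{2/3} and local degree at most d/2 + d^{2/3}. -/

import Mathlib

set_option linter.unusedSectionVars false
set_option maxHeartbeats 1000000

open Finset

variable {V : Type} [Fintype V] [DecidableEq V]

def detBy (T : Finset V) (E : Finset (V → Bool)) : Prop :=
  ∀ ω ω' : V → Bool, (∀ r ∈ T, ω r = ω' r) → ω ∈ E → ω' ∈ E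

lemma detBy_mono {T T' : Finset V} {E : Finset (V → Bool)} (h : T ⊆ T') (hd : detBy T E) :
    detBy T' E := fun ω ω' hag => hd ω ω' (fun r hr => hag r (h hr))

def graft (X : Finset V) (ω ω' : V → Bool) : V → Bool := fun r => if r ∈ X then ω r else ω' r

lemma indep_card {X Y : Finset V} {E F : Finset (V → Bool)} (hE : detBy X E) (hF : detBy Y F)
    (hXY : Disjoint X Y) :
    (E ∩ F).card * 2 ^ (Fintype.card V) = E.card * F.card := by
  have key : ((E ∩ F) ×ˢ (univ : Finset (V → Bool))).card = (E ×ˢ F).card := by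
    apply card_nbij' (fun p => (graft X p.1 p.2, graft X p.2 p.1))
      (fun p => (graft X p.1 p.2, graft X p.2 p.1))
    · rintro ⟨ω, ω'⟩ hp
      simp only [mem_coe, mem_product, mem_inter, mem_univ, and_true] at hp
      simp only [mem_coe, mem_product]
      constructor
      · exact hE ω _ (fun r hr => by simp [graft, hr]) hp.1
      · exact hF ω _ (fun r hr => by simp [graft, (disjoint_right.mp hXY hr)]) hp.2
    · rintro ⟨a, b⟩ hp
      simp only [mem_coe, mem_product] at hp
      simp only [mem_coe, mem_product]
      exact ⟨mem_inter.mpr ⟨hE a _ (fun r hr => by simp [graft, hr]) hp.1,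
        hF b _ (fun r hr => by simp [graft, (disjoint_right.mp hXY hr)]) hp.2⟩, mem_univ _⟩
    · rintro ⟨ω, ω'⟩ _
      simp only [Prod.mk.injEq]
      constructor <;> funext r <;> by_cases h : r ∈ X <;> simp [graft, h]
    · rintro ⟨a, b⟩ _
      simp only [Prod.mk.injEq]
      constructor <;> funext r <;> by_cases h : r ∈ X <;> simp [graft, h]
  have h1 : ((E ∩ F) ×ˢ (univ : Finset (V → Bool))).card
      = (E ∩ F).card * 2 ^ (Fintype.card V) := by
    rw [card_product, card_univ, Fintype.card_fun]; simp
  have h2 : (E ×ˢ F).card = E.card * F.card := card_product _ _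
  omega

section LLL

variable {J : Type} [Fintype J] [DecidableEq J]
variable (Ev : J → Finset (V → Bool))

/-- ω avoiding all events indexed by S -/
def good (S : Finset J) : Finset (V → Bool) :=
  univ.filter (fun ω => ∀ b ∈ S, ω ∉ Ev b)

lemma good_anti {S S' : Finset J} (h : S ⊆ S') : good Ev S' ⊆ good Ev S := by
  intro ω hω
  simp only [good, mem_filter, mem_univ, true_and] at hω ⊢
  exact fun b hb => hω b (h hb)

lemma detBy_good (vbl : J → Finset V) (hdet : ∀ a, detBy (vbl a) (Ev a)) (S : Finset J) :
    detBy (S.biUnion vbl) (good Ev S) := by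
  intro ω ω' hag hω
  simp only [good, mem_filter, mem_univ, true_and] at hω ⊢
  intro b hb hmem
  exact hω b hb (hdet b ω' ω (fun r hr => (hag r (mem_biUnion.mpr ⟨b, hb, hr⟩)).symm) hmem)

lemma lll_main (vbl : J → Finset V) (hdet : ∀ a, detBy (vbl a) (Ev a))
    (p : ℝ) (hp0 : 0 ≤ p) (D : ℕ)
    (hcard : ∀ a, ((Ev a).card : ℝ) ≤ p * 2 ^ (Fintype.card V))
    (hdep : ∀ a, ((univ.filter (fun b => ¬ Disjoint (vbl a) (vbl b))).card : ℕ) ≤ D)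
    (hpD : 4 * p * D ≤ 1) :
    ∀ n (S : Finset J), S.card ≤ n → ∀ a,
      ((Ev a ∩ good Ev S).card : ℝ) ≤ 2 * p * (good Ev S).card := by
  -- helper: if all of S's vbls are disjoint from vbl a, independence bound
  have key : ∀ (S : Finset J) a, (∀ b ∈ S, Disjoint (vbl a) (vbl b)) →
      ((Ev a ∩ good Ev S).card : ℝ) ≤ p * (good Ev S).card := by
    intro S a hdisj
    have hd : Disjoint (vbl a) (S.biUnion vbl) := by
      rw [disjoint_biUnion_right]; exact hdisj
    have h := indep_card (hdet a) (detBy_good Ev vbl hdet S) hd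
    have h2 : ((Ev a ∩ good Ev S).card : ℝ) * 2 ^ (Fintype.card V)
        = ((Ev a).card : ℝ) * (good Ev S).card := by exact_mod_cast congrArg Nat.cast h
    have hpow : (0:ℝ) < 2 ^ (Fintype.card V) := by positivity
    rw [← mul_le_mul_iff_of_pos_right hpow, h2]
    calc ((Ev a).card : ℝ) * (good Ev S).card ≤ (p * 2 ^ (Fintype.card V)) * (good Ev S).card := by
          apply mul_le_mul_of_nonneg_right (hcard a) (by positivity)
      _ = p * (good Ev S).card * 2 ^ (Fintype.card V) := by ring
  intro n
  induction n with
  | zero =>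
    intro S hS a
    have : S = ∅ := card_eq_zero.mp (le_antisymm hS (Nat.zero_le _))
    subst this
    calc ((Ev a ∩ good Ev ∅).card : ℝ) ≤ p * (good Ev ∅).card := key ∅ a (by simp)
      _ ≤ 2 * p * (good Ev ∅).card := by nlinarith [Nat.cast_nonneg (α := ℝ) (good Ev ∅).card]
  | succ n ih =>
    intro S hS a
    set S₁ := S.filter (fun b => ¬ Disjoint (vbl a) (vbl b)) with hS₁
    set S₂ := S.filter (fun b => Disjoint (vbl a) (vbl b)) with hS₂
    have hdisj2 : ∀ b ∈ S₂, Disjoint (vbl a) (vbl b) := fun b hb => (mem_filter.mp hb).2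
    by_cases h1 : S₁ = ∅
    · -- then S = S₂
      have : S = S₂ := by
        rw [hS₂]
        rw [Finset.filter_true_of_mem]
        intro b hb
        by_contra hc
        exact (eq_empty_iff_forall_notMem.mp h1 b) (mem_filter.mpr ⟨hb, hc⟩)
      rw [this]
      calc ((Ev a ∩ good Ev S₂).card : ℝ) ≤ p * (good Ev S₂).card := key S₂ a hdisj2
        _ ≤ 2 * p * (good Ev S₂).card := by
            nlinarith [Nat.cast_nonneg (α := ℝ) (good Ev S₂).card]
    · -- S₁ nonempty
      have hcards : S₁.card + S₂.card = S.card := by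
        have := Finset.card_filter_add_card_filter_not (s := S)
          (p := fun b => Disjoint (vbl a) (vbl b))
        rw [hS₁, hS₂]
        omega
      have hS₁pos : 0 < S₁.card := card_pos.mpr (nonempty_iff_ne_empty.mpr h1)
      have hS₂n : S₂.card ≤ n := by omega
      -- independence bound on S₂
      have kA : ((Ev a ∩ good Ev S₂).card : ℝ) ≤ p * (good Ev S₂).card := key S₂ a hdisj2
      -- good S ⊆ good S₂
      have hsub : good Ev S ⊆ good Ev S₂ := good_anti Ev (filter_subset _ _)
      -- good S₂ \ good S ⊆ ⋃ b∈S₁, Ev b ∩ good S₂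
      have hsdiff : good Ev S₂ \ good Ev S ⊆ S₁.biUnion (fun b => Ev b ∩ good Ev S₂) := by
        intro ω hω
        simp only [mem_sdiff, good, mem_filter, mem_univ, true_and] at hω
        obtain ⟨hg2, hg⟩ := hω
        push_neg at hg
        obtain ⟨b, hbS, hbE⟩ := hg
        have hbS₁ : b ∈ S₁ := by
          rw [hS₁, mem_filter]
          refine ⟨hbS, fun hd => ?_⟩
          exact hg2 b (mem_filter.mpr ⟨hbS, hd⟩) hbE
        exact mem_biUnion.mpr ⟨b, hbS₁, mem_inter.mpr ⟨hbE, by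
          simp only [good, mem_filter, mem_univ, true_and]; exact hg2⟩⟩
      have hcard_sdiff : ((good Ev S₂).card : ℝ)
          ≤ (good Ev S).card + ∑ b ∈ S₁, ((Ev b ∩ good Ev S₂).card : ℝ) := by
        have h1' : (good Ev S₂).card - (good Ev S).card
            ≤ ∑ b ∈ S₁, (Ev b ∩ good Ev S₂).card := by
          rw [← card_sdiff_of_subset hsub]
          exact le_trans (card_le_card hsdiff) card_biUnion_le
        have h3' : (good Ev S).card ≤ (good Ev S₂).card := card_le_card hsub
        have h4' : (good Ev S₂).card ≤ (good Ev S).card + ∑ b ∈ S₁, (Ev b ∩ good Ev S₂).card := by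
          omega
        exact_mod_cast h4'
      -- each term small by IH
      have hterm : ∀ b ∈ S₁, ((Ev b ∩ good Ev S₂).card : ℝ) ≤ 2 * p * (good Ev S₂).card :=
        fun b _ => ih S₂ hS₂n b
      have hS₁D : (S₁.card : ℝ) ≤ D := by
        have : S₁ ⊆ univ.filter (fun b => ¬ Disjoint (vbl a) (vbl b)) := by
          intro b hb; exact mem_filter.mpr ⟨mem_univ _, (mem_filter.mp hb).2⟩
        exact_mod_cast le_trans (card_le_card this) (hdep a)
      have hhalf : (1/2 : ℝ) * (good Ev S₂).card ≤ (good Ev S).card := by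
        have hsum : ∑ b ∈ S₁, ((Ev b ∩ good Ev S₂).card : ℝ)
            ≤ S₁.card * (2 * p * (good Ev S₂).card) := by
          calc ∑ b ∈ S₁, ((Ev b ∩ good Ev S₂).card : ℝ)
              ≤ ∑ _b ∈ S₁, (2 * p * (good Ev S₂).card) := Finset.sum_le_sum hterm
            _ = S₁.card * (2 * p * (good Ev S₂).card) := by
                rw [Finset.sum_const, nsmul_eq_mul]
        have hDp : (S₁.card : ℝ) * (2 * p) ≤ 1/2 := by
          calc (S₁.card : ℝ) * (2 * p) ≤ (D : ℝ) * (2 * p) := by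
                apply mul_le_mul_of_nonneg_right hS₁D (by positivity)
            _ ≤ 1/2 := by nlinarith
        nlinarith [Nat.cast_nonneg (α := ℝ) (good Ev S₂).card,
          Nat.cast_nonneg (α := ℝ) (good Ev S).card]
      calc ((Ev a ∩ good Ev S).card : ℝ) ≤ ((Ev a ∩ good Ev S₂).card : ℝ) := by
            exact_mod_cast card_le_card (inter_subset_inter Subset.rfl hsub)
        _ ≤ p * (good Ev S₂).card := kA
        _ ≤ p * (2 * (good Ev S).card) := by
            apply mul_le_mul_of_nonneg_left _ hp0
            nlinarith
        _ = 2 * p * (good Ev S).card := by ring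

lemma lll (vbl : J → Finset V) (hdet : ∀ a, detBy (vbl a) (Ev a))
    (p : ℝ) (hp0 : 0 ≤ p) (hp8 : p ≤ 1/8) (D : ℕ)
    (hcard : ∀ a, ((Ev a).card : ℝ) ≤ p * 2 ^ (Fintype.card V))
    (hdep : ∀ a, ((univ.filter (fun b => ¬ Disjoint (vbl a) (vbl b))).card : ℕ) ≤ D)
    (hpD : 4 * p * D ≤ 1) :
    ∃ ω : V → Bool, ∀ a, ω ∉ Ev a := by
  have main := lll_main Ev vbl hdet p hp0 D hcard hdep hpD
  have pos : ∀ S : Finset J, 0 < ((good Ev S).card : ℝ) := by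
    intro S
    induction S using Finset.induction_on with
    | empty =>
      have : good Ev (∅ : Finset J) = univ := by
        simp [good]
      rw [this, card_univ, Fintype.card_fun]
      positivity
    | @insert a S ha ih =>
      have heq : good Ev (insert a S) = good Ev S \ Ev a := by
        ext ω
        simp only [good, mem_sdiff, mem_filter, mem_univ, true_and, mem_insert]
        constructor
        · intro h; exact ⟨fun b hb => h b (Or.inr hb), h a (Or.inl rfl)⟩
        · rintro ⟨h1, h2⟩ b (rfl | hb)
          · exact h2
          · exact h1 b hb
      have hcs : (good Ev S \ Ev a).card + (good Ev S ∩ Ev a).card = (good Ev S).card :=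
        card_sdiff_add_card_inter _ _
      have hb : ((good Ev S ∩ Ev a).card : ℝ) ≤ 2 * p * (good Ev S).card := by
        rw [inter_comm]; exact main S.card S le_rfl a
      have : ((good Ev S \ Ev a).card : ℝ) ≥ (1 - 2*p) * (good Ev S).card := by
        have := congrArg (Nat.cast (R := ℝ)) hcs
        push_cast at this
        nlinarith
      rw [heq]
      nlinarith
  have := pos univ
  have hne : (good Ev univ).Nonempty := card_pos.mp (by exact_mod_cast this)
  obtain ⟨ω, hω⟩ := hne
  simp only [good, mem_filter, mem_univ, true_and] at hω
  exact ⟨ω, fun a => hω a trivial⟩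

end LLL


section Pairing

variable (A : Finset V) (f : V → V)

/-- count of chosen neighbors -/
def cnt (N : Finset V) (ω : V → Bool) : ℕ :=
  ∑ a ∈ A, ((if a ∈ N ∧ ω a = true then 1 else 0) + (if f a ∈ N ∧ ω a = false then 1 else 0))

/-- the chosen set: one from each pair -/
def chosen (ω : V → Bool) : Finset V :=
  univ.filter (fun v => if v ∈ A then ω v = true else ω (f v) = false)

variable (hf2 : ∀ v, f (f v) = v) (hfA : ∀ v, v ∈ A ↔ f v ∉ A)
include hf2 hfA

lemma pair_count (M : Finset V) :
    ∑ a ∈ A, ((if a ∈ M then 1 else 0) + (if f a ∈ M then 1 else 0)) = M.card := by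
  have hmem : ∀ v ∈ M, (if v ∈ A then v else f v) ∈ A := by
    intro v _
    by_cases h : v ∈ A
    · simpa [h]
    · have : f v ∈ A := by
        by_contra hc
        exact h ((hfA v).mpr hc)
      simpa [h]
  rw [Finset.card_eq_sum_card_fiberwise hmem]
  apply Finset.sum_congr rfl
  intro a ha
  have hfa : f a ∉ A := (hfA a).mp ha
  have hne : a ≠ f a := fun h => hfa (h ▸ ha)
  have hfilter : M.filter (fun v => (if v ∈ A then v else f v) = a) = ({a, f a} : Finset V).filter (· ∈ M) := by
    ext v
    simp only [mem_filter, mem_insert, mem_singleton]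
    constructor
    · rintro ⟨hvM, hv⟩
      by_cases h : v ∈ A
      · rw [if_pos h] at hv; exact ⟨Or.inl hv, hvM⟩
      · rw [if_neg h] at hv
        refine ⟨Or.inr ?_, hvM⟩
        rw [← hv, hf2]
    · rintro ⟨hv, hvM⟩
      refine ⟨hvM, ?_⟩
      rcases hv with rfl | rfl
      · rw [if_pos ha]
      · rw [if_neg hfa, hf2]
  rw [hfilter, Finset.card_filter, Finset.sum_insert (by simpa using hne), Finset.sum_singleton]

lemma cnt_eq_card (N : Finset V) (ω : V → Bool) :
    cnt A f N ω = (N ∩ chosen A f ω).card := by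
  rw [← pair_count A f hf2 hfA (N ∩ chosen A f ω)]
  unfold cnt
  apply Finset.sum_congr rfl
  intro a ha
  have hfa : f a ∉ A := (hfA a).mp ha
  have h1 : a ∈ N ∩ chosen A f ω ↔ (a ∈ N ∧ ω a = true) := by
    simp only [mem_inter, chosen, mem_filter, mem_univ, true_and]
    rw [if_pos ha]
  have h2 : f a ∈ N ∩ chosen A f ω ↔ (f a ∈ N ∧ ω a = false) := by
    simp only [mem_inter, chosen, mem_filter, mem_univ, true_and]
    rw [if_neg hfa, hf2]
  congr 1
  · by_cases h : a ∈ N ∧ ω a = true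
    · rw [if_pos (h1.mpr h), if_pos h]
    · rw [if_neg (fun hc => h (h1.mp hc)), if_neg h]
  · by_cases h : f a ∈ N ∧ ω a = false
    · rw [if_pos (h2.mpr h), if_pos h]
    · rw [if_neg (fun hc => h (h2.mp hc)), if_neg h]

end Pairing

section Pairing2

variable (A : Finset V) (f : V → V)
variable (hf2 : ∀ v, f (f v) = v) (hfA : ∀ v, v ∈ A ↔ f v ∉ A)
include hf2 hfA

lemma chosen_inter_card (M : Finset V) (hM : ∀ v, v ∈ M ↔ f v ∈ M) (ω : V → Bool) :
    (M ∩ chosen A f ω).card = (M ∩ A).card := by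
  apply card_nbij' (fun v => if v ∈ A then v else f v) (fun a => if ω a = true then a else f a)
  · intro v hv
    simp only [mem_coe, mem_inter] at hv ⊢
    by_cases h : v ∈ A
    · rw [if_pos h]; exact ⟨hv.1, h⟩
    · rw [if_neg h]
      refine ⟨(hM v).mp hv.1, ?_⟩
      by_contra hc
      exact h ((hfA v).mpr hc)
  · intro a ha
    simp only [mem_coe, mem_inter] at ha ⊢
    by_cases h : ω a = true
    · rw [if_pos h]
      exact ⟨ha.1, by simp only [chosen, mem_filter, mem_univ, true_and, if_pos ha.2]; exact h⟩
    · rw [if_neg h]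
      refine ⟨(hM a).mp ha.1, ?_⟩
      simp only [chosen, mem_filter, mem_univ, true_and, if_neg ((hfA a).mp ha.2), hf2]
      simpa using h
  · intro v hv
    simp only [mem_coe, mem_inter, chosen, mem_filter, mem_univ, true_and] at hv
    dsimp only
    by_cases h : v ∈ A
    · rw [if_pos h]
      rw [if_pos h] at hv
      rw [if_pos hv.2]
    · rw [if_neg h]
      rw [if_neg h] at hv
      rw [if_neg (by simp [hv.2]), hf2]
  · intro a ha
    simp only [mem_coe, mem_inter] at ha
    dsimp only
    by_cases h : ω a = true
    · rw [if_pos h, if_pos ha.2]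
    · rw [if_neg h, if_neg ((hfA a).mp ha.2), hf2]

lemma card_AN_le (N : Finset V) :
    (A.filter (fun a => a ∈ N ∨ f a ∈ N)).card ≤ N.card := by
  apply card_le_card_of_injOn (fun a => if a ∈ N then a else f a)
  · intro a ha
    simp only [mem_coe, mem_filter] at ha ⊢
    rcases ha.2 with h | h
    · rwa [if_pos h]
    · by_cases h' : a ∈ N
      · rwa [if_pos h']
      · rwa [if_neg h']
  · intro a ha b hb hab
    simp only [coe_filter, Set.mem_setOf_eq] at ha hb
    simp only at hab
    by_cases h1 : a ∈ N
    · by_cases h2 : b ∈ N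
      · rwa [if_pos h1, if_pos h2] at hab
      · rw [if_pos h1, if_neg h2] at hab
        exact absurd (hab ▸ ha.1) ((hfA b).mp hb.1)
    · by_cases h2 : b ∈ N
      · rw [if_neg h1, if_pos h2] at hab
        exact absurd (hab ▸ hb.1 : f a ∈ A) ((hfA a).mp ha.1)
      · rw [if_neg h1, if_neg h2] at hab
        have := congrArg f hab
        rwa [hf2, hf2] at this

end Pairing2

lemma cnt_agree (A : Finset V) (f : V → V) (N : Finset V) (ω ω' : V → Bool)
    (h : ∀ r ∈ A.filter (fun a => a ∈ N ∨ f a ∈ N), ω r = ω' r) :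
    cnt A f N ω = cnt A f N ω' := by
  unfold cnt
  apply Finset.sum_congr rfl
  intro a ha
  by_cases hAN : a ∈ N ∨ f a ∈ N
  · rw [h a (mem_filter.mpr ⟨ha, hAN⟩)]
  · push_neg at hAN
    rw [if_neg (fun hc => hAN.1 hc.1), if_neg (fun hc => hAN.2 hc.1),
      if_neg (fun hc => hAN.1 hc.1), if_neg (fun hc => hAN.2 hc.1)]

lemma chernoff_bound (A : Finset V) (f : V → V)
    (hf2 : ∀ v, f (f v) = v) (hfA : ∀ v, v ∈ A ↔ f v ∉ A)
    (N : Finset V) (Dr a₀ θ : ℝ) (hN : (N.card : ℝ) ≤ Dr) (hDr : 0 < Dr)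
    (ha : 0 < a₀) (hθ : Dr/2 + a₀ ≤ θ) :
    (((univ.filter (fun ω : V → Bool => θ < (cnt A f N ω : ℝ))).card : ℝ))
      ≤ Real.exp (-(2*a₀^2/Dr)) * 2 ^ (Fintype.card V) := by
  classical
  set lam : ℝ := 4*a₀/Dr with hlam
  have hlam0 : 0 < lam := by positivity
  set AN := A.filter (fun a => a ∈ N ∨ f a ∈ N) with hAN
  set c : V → Bool → ℝ := fun r b =>
    (if r ∈ N ∧ b = true then 1 else 0) + (if f r ∈ N ∧ b = false then 1 else 0) with hc
  set w : V → ℝ := fun r => (if r ∈ N then 1 else 0) + (if f r ∈ N then 1 else 0) with hw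
  set g : V → Bool → ℝ := fun r b =>
    if r ∈ AN then Real.exp (lam * (c r b - w r / 2)) else 1 with hg
  have hgpos : ∀ r b, 0 < g r b := by
    intro r b
    rw [hg]
    dsimp only
    split
    · exact Real.exp_pos _
    · norm_num
  -- sum of w over AN is N.card
  have hsumw : ∑ r ∈ AN, w r = (N.card : ℝ) := by
    have h1 : ∑ r ∈ A, w r = (N.card : ℝ) := by
      have := pair_count A f hf2 hfA N
      calc ∑ r ∈ A, w r
          = ((∑ a ∈ A, ((if a ∈ N then 1 else 0) + (if f a ∈ N then 1 else 0)) : ℕ) : ℝ) := by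
            push_cast [hw]; rfl
        _ = (N.card : ℝ) := by rw [this]
    rw [← h1]
    apply Finset.sum_subset (filter_subset _ _)
    intro r hrA hr
    simp only [mem_filter, not_and, not_or] at hr
    obtain ⟨h1', h2'⟩ := hr hrA
    simp [hw, h1', h2']
  -- cnt as a real sum over AN
  have hcnt : ∀ ω : V → Bool, (cnt A f N ω : ℝ) = ∑ r ∈ AN, c r (ω r) := by
    intro ω
    have h1 : (cnt A f N ω : ℝ) = ∑ r ∈ A, c r (ω r) := by
      rw [cnt, hc]
      push_cast
      rfl
    rw [h1]
    symm
    apply Finset.sum_subset (filter_subset _ _)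
    intro r hrA hr
    simp only [mem_filter, not_and, not_or] at hr
    obtain ⟨h1', h2'⟩ := hr hrA
    simp [hc, h1', h2']
  -- product formula
  have hprod : ∀ ω : V → Bool, ∏ r, g r (ω r)
      = Real.exp (lam * ((cnt A f N ω : ℝ) - (N.card : ℝ)/2)) := by
    intro ω
    have h1 : ∏ r, g r (ω r) = ∏ r ∈ AN, Real.exp (lam * (c r (ω r) - w r / 2)) := by
      rw [← Finset.prod_subset (subset_univ AN) (fun x _ hx => by simp [hg, hx])]
      exact Finset.prod_congr rfl (fun x hx => by simp [hg, hx])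
    rw [h1, ← Real.exp_sum]
    congr 1
    rw [← Finset.mul_sum, Finset.sum_sub_distrib, ← Finset.sum_div, hcnt ω, hsumw]
  -- sum over all ω of the product
  have hsum : ∑ ω : V → Bool, ∏ r, g r (ω r) = ∏ r, (g r true + g r false) := by
    have := Finset.prod_univ_sum (fun _ : V => (univ : Finset Bool)) g
    rw [Fintype.piFinset_univ] at this
    rw [← this]
    apply Finset.prod_congr rfl
    intro r _
    rw [Fintype.sum_bool]
  -- bound the product of sums
  have hANcard : (AN.card : ℝ) ≤ Dr := le_trans (by exact_mod_cast card_AN_le A f hf2 hfA N) hN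
  have hfactor : ∀ r ∈ AN, g r true + g r false ≤ 2 * Real.exp (lam^2/8) := by
    intro r hr
    have hrAN := hr
    rw [hAN, mem_filter] at hr
    have hgt : g r true = Real.exp (lam * (c r true - w r / 2)) := by simp [hg, hrAN]
    have hgf : g r false = Real.exp (lam * (c r false - w r / 2)) := by simp [hg, hrAN]
    rw [hgt, hgf]
    have hcosh : ∀ x : ℝ, Real.exp x + Real.exp (-x) ≤ 2 * Real.exp (x^2/2) := by
      intro x
      have h := Real.cosh_le_exp_half_sq x
      rw [Real.cosh_eq] at h
      linarith
    rcases hr.2 with h1 | h1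
    · by_cases h2 : f r ∈ N
      · -- both
        have hc1 : c r true = 1 := by simp [hc, h1]
        have hc2 : c r false = 1 := by simp [hc, h2]
        have hw1 : w r = 2 := by simp [hw, h1, h2]; norm_num
        rw [hc1, hc2, hw1]
        have hz : lam * (1 - 2/2) = 0 := by ring
        rw [hz, Real.exp_zero]
        nlinarith [Real.one_le_exp (by positivity : (0:ℝ) ≤ lam^2/8)]
      · -- only r ∈ N
        have hc1 : c r true = 1 := by simp [hc, h1]
        have hc2 : c r false = 0 := by simp [hc, h1, h2]
        have hw1 : w r = 1 := by simp [hw, h1, h2]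
        rw [hc1, hc2, hw1]
        have := hcosh (lam/2)
        have he1 : lam * (1 - 1/2) = lam/2 := by ring
        have he2 : lam * (0 - 1/2) = -(lam/2) := by ring
        have he3 : (lam/2)^2/2 = lam^2/8 := by ring
        rw [he1, he2]
        rw [he3] at this
        linarith
    · by_cases h2 : r ∈ N
      · have hc1 : c r true = 1 := by simp [hc, h2]
        have hc2 : c r false = 1 := by simp [hc, h1]
        have hw1 : w r = 2 := by simp [hw, h1, h2]; norm_num
        rw [hc1, hc2, hw1]
        have hz : lam * (1 - 2/2) = 0 := by ring
        rw [hz, Real.exp_zero]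
        nlinarith [Real.one_le_exp (by positivity : (0:ℝ) ≤ lam^2/8)]
      · have hc1 : c r true = 0 := by simp [hc, h2]
        have hc2 : c r false = 1 := by simp [hc, h1, h2]
        have hw1 : w r = 1 := by simp [hw, h1, h2]
        rw [hc1, hc2, hw1]
        have := hcosh (lam/2)
        have he1 : lam * (0 - 1/2) = -(lam/2) := by ring
        have he2 : lam * (1 - 1/2) = lam/2 := by ring
        have he3 : (lam/2)^2/2 = lam^2/8 := by ring
        rw [he1, he2]
        rw [he3] at this
        linarith
  have hprodbound : ∏ r, (g r true + g r false)
      ≤ 2 ^ (Fintype.card V) * Real.exp (Dr * lam^2 / 8) := by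
    have hsplit : ∏ r, (g r true + g r false)
        = (∏ r ∈ AN, (g r true + g r false)) * ∏ r ∈ ANᶜ, (g r true + g r false) :=
      (Finset.prod_mul_prod_compl AN _).symm
    have h2 : ∏ r ∈ ANᶜ, (g r true + g r false) = 2 ^ (ANᶜ.card) := by
      rw [Finset.prod_congr rfl (fun r hr => ?_), Finset.prod_const]
      have : r ∉ AN := by simpa using hr
      simp [hg, this]
      norm_num
    have h1 : ∏ r ∈ AN, (g r true + g r false) ≤ (2 * Real.exp (lam^2/8)) ^ AN.card := by
      rw [← Finset.prod_const]
      apply Finset.prod_le_prod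
      · intro r _
        have := hgpos r true
        have := hgpos r false
        linarith
      · exact hfactor
    calc ∏ r, (g r true + g r false)
        ≤ (2 * Real.exp (lam^2/8)) ^ AN.card * 2 ^ (ANᶜ.card) := by
          rw [hsplit, h2]
          apply mul_le_mul_of_nonneg_right h1 (by positivity)
      _ = 2 ^ (Fintype.card V) * Real.exp (lam^2/8) ^ AN.card := by
          rw [mul_pow]
          have : AN.card + ANᶜ.card = Fintype.card V := by
            rw [Finset.card_compl]
            have := Finset.card_le_univ AN
            omega
          rw [← this, pow_add]
          ring
      _ ≤ 2 ^ (Fintype.card V) * Real.exp (Dr * lam^2 / 8) := by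
          apply mul_le_mul_of_nonneg_left _ (by positivity)
          rw [← Real.exp_nat_mul]
          apply Real.exp_le_exp.mpr
          have h8 : (0:ℝ) ≤ lam^2/8 := by positivity
          calc (AN.card : ℝ) * (lam^2/8) ≤ Dr * (lam^2/8) :=
                mul_le_mul_of_nonneg_right hANcard h8
            _ = Dr * lam^2/8 := by ring
  -- Markov
  set E := univ.filter (fun ω : V → Bool => θ < (cnt A f N ω : ℝ)) with hE
  have hmark : (E.card : ℝ) * Real.exp (lam * a₀) ≤ ∑ ω : V → Bool, ∏ r, g r (ω r) := by
    have hperω : ∀ ω ∈ E, Real.exp (lam * a₀) ≤ ∏ r, g r (ω r) := by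
      intro ω hω
      rw [hE, mem_filter] at hω
      rw [hprod ω]
      apply Real.exp_le_exp.mpr
      apply mul_le_mul_of_nonneg_left _ (le_of_lt hlam0)
      have : (N.card : ℝ)/2 + a₀ ≤ θ := by linarith
      linarith [hω.2]
    calc (E.card : ℝ) * Real.exp (lam * a₀) = ∑ _ω ∈ E, Real.exp (lam * a₀) := by
          rw [Finset.sum_const, nsmul_eq_mul]
      _ ≤ ∑ ω ∈ E, ∏ r, g r (ω r) := Finset.sum_le_sum hperω
      _ ≤ ∑ ω : V → Bool, ∏ r, g r (ω r) := by
          apply Finset.sum_le_sum_of_subset_of_nonneg (subset_univ E)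
          intro ω _ _
          exact le_of_lt (Finset.prod_pos (fun r _ => hgpos r (ω r)))
  have hDrne : Dr ≠ 0 := ne_of_gt hDr
  have hexp_eq : Real.exp (Dr * lam^2/8) / Real.exp (lam * a₀) = Real.exp (-(2*a₀^2/Dr)) := by
    rw [← Real.exp_sub]
    congr 1
    rw [hlam]
    field_simp
    ring
  have hfinal : (E.card : ℝ) ≤ 2 ^ (Fintype.card V) * Real.exp (Dr * lam^2/8)
      / Real.exp (lam * a₀) := by
    rw [le_div_iff₀ (Real.exp_pos _)]
    calc (E.card : ℝ) * Real.exp (lam * a₀) ≤ ∑ ω : V → Bool, ∏ r, g r (ω r) := hmark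
      _ = ∏ r, (g r true + g r false) := hsum
      _ ≤ 2 ^ (Fintype.card V) * Real.exp (Dr * lam^2 / 8) := hprodbound
  calc (E.card : ℝ) ≤ 2 ^ (Fintype.card V) * Real.exp (Dr * lam^2/8) / Real.exp (lam * a₀) :=
        hfinal
    _ = Real.exp (-(2*a₀^2/Dr)) * 2 ^ (Fintype.card V) := by
        rw [mul_div_assoc, hexp_eq]
        ring

lemma log_le_poly {x : ℝ} (h : Real.exp 4096 ≤ x) : (Real.log x)^4 ≤ x := by
  have hx0 : (0:ℝ) < x := lt_of_lt_of_le (Real.exp_pos _) h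
  set y := Real.log x with hy
  have hy4096 : (4096:ℝ) ≤ y := by
    rw [hy, ← Real.log_exp 4096]
    exact Real.log_le_log (Real.exp_pos _) h
  have hy0 : (0:ℝ) < y := by linarith
  have h112 : Real.log (x^((1:ℝ)/12)) = y/12 := by rw [Real.log_rpow hx0]; ring
  have hrp : (0:ℝ) < x^((1:ℝ)/12) := Real.rpow_pos_of_pos hx0 _
  have hlog12 : y ≤ 12 * x^((1:ℝ)/12) := by
    have h2 := Real.log_le_sub_one_of_pos hrp
    rw [h112] at h2
    nlinarith
  have h4 : y^4 ≤ 20736 * x^((1:ℝ)/3) := by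
    calc y^4 ≤ (12 * x^((1:ℝ)/12))^4 := by
          apply pow_le_pow_left₀ hy0.le hlog12
      _ = 20736 * (x^((1:ℝ)/12))^(4:ℕ) := by ring
      _ = 20736 * x^((1:ℝ)/3) := by
          rw [← Real.rpow_natCast (x^((1:ℝ)/12)) 4, ← Real.rpow_mul hx0.le]
          norm_num
  have h23 : (20736:ℝ) ≤ x^((2:ℝ)/3) := by
    have hxe : x^((2:ℝ)/3) = Real.exp (y * (2/3)) := by
      rw [Real.rpow_def_of_pos hx0]
    rw [hxe]
    have hge : (2730:ℝ) ≤ y * (2/3) := by nlinarith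
    calc (20736:ℝ) ≤ 1366 * 1366 := by norm_num
      _ ≤ Real.exp 1365 * Real.exp 1365 := by
          nlinarith [Real.add_one_le_exp (1365:ℝ)]
      _ = Real.exp 2730 := by rw [← Real.exp_add]; norm_num
      _ ≤ Real.exp (y * (2/3)) := Real.exp_le_exp.mpr hge
  calc y^4 ≤ 20736 * x^((1:ℝ)/3) := h4
    _ ≤ x^((2:ℝ)/3) * x^((1:ℝ)/3) := by
        apply mul_le_mul_of_nonneg_right h23 (Real.rpow_pos_of_pos hx0 _).le
    _ = x := by
        rw [← Real.rpow_add hx0]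
        norm_num
theorem stmt_12 : ∃ Δ₀ : ℕ, ∀ Δ : ℕ, Δ₀ ≤ Δ →
    ∀ (V ι : Type) [Finite V] (G : SimpleGraph V) (P : ι → Set V) (s : ℕ) (d : ℝ),
      (∀ v, ∃! i, v ∈ P i) →
      (∀ v, (G.neighborSet v).ncard ≤ Δ) →
      (∀ (v : V) (i : ι), v ∉ P i → ((G.neighborSet v ∩ P i).ncard : ℝ) ≤ d) →
      (∀ i, (P i).ncard = 2 * s) →
      (Real.log Δ) ^ 4 < d →
      ∃ U : ι → Set V,
        (∀ i, U i ⊆ P i) ∧ (∀ i, (U i).ncard = s) ∧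
        (∀ v ∈ ⋃ i, U i,
          (((G.neighborSet v) ∩ ⋃ i, U i).ncard : ℝ) ≤ (Δ : ℝ) / 2 + (Δ : ℝ) ^ ((2 : ℝ) / 3)) ∧
        (∀ v ∈ ⋃ i, U i, ∀ i, v ∉ P i →
          (((G.neighborSet v) ∩ U i).ncard : ℝ) ≤ d / 2 + d ^ ((2 : ℝ) / 3)) := by
  classical
  refine ⟨Nat.ceil (Real.exp 4096), fun Δ hΔ V ι _ G P s d huniq hdeg hlocdeg hsize hd => ?_⟩
  classical
  -- numeric setup
  have hΔR : Real.exp 4096 ≤ (Δ : ℝ) := by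
    calc Real.exp 4096 ≤ (Nat.ceil (Real.exp 4096) : ℝ) := Nat.le_ceil _
      _ ≤ (Δ : ℝ) := by exact_mod_cast hΔ
  have hΔ0 : (0:ℝ) < Δ := lt_of_lt_of_le (Real.exp_pos _) hΔR
  have hΔ2 : (2:ℝ) ≤ Δ :=
    le_trans (by nlinarith [Real.add_one_le_exp (4096:ℝ)]) hΔR
  set y := Real.log (Δ:ℝ) with hy
  have hy4096 : (4096:ℝ) ≤ y := by
    rw [hy, ← Real.log_exp 4096]
    exact Real.log_le_log (Real.exp_pos _) hΔR
  have hy0 : (0:ℝ) < y := by linarith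
  have hd' : y^4 < d := hd
  have hd1 : (1:ℝ) ≤ d := by
    have h1y : (1:ℝ) ≤ y := by linarith
    nlinarith [pow_le_pow_left₀ (by norm_num : (0:ℝ) ≤ 1) h1y 4]
  have hd0 : (0:ℝ) < d := by linarith
  -- the probability bound
  set p := Real.exp (-(2 * y^((4:ℝ)/3))) with hp
  have hp0 : (0:ℝ) ≤ p := (Real.exp_pos _).le
  have h43 : y^((4:ℝ)/3) = y * y^((1:ℝ)/3) := by
    rw [show ((4:ℝ)/3) = 1 + (1:ℝ)/3 by norm_num, Real.rpow_add hy0, Real.rpow_one]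
  have h13 : (4:ℝ) ≤ y^((1:ℝ)/3) := by
    have h64 : (64:ℝ) ≤ y := by linarith
    calc (4:ℝ) = (64:ℝ)^((1:ℝ)/3) := by
          rw [show (64:ℝ) = 4^(3:ℕ) by norm_num, ← Real.rpow_natCast 4 3,
            ← Real.rpow_mul (by norm_num : (0:ℝ) ≤ 4)]
          norm_num
      _ ≤ y^((1:ℝ)/3) := Real.rpow_le_rpow (by norm_num) h64 (by norm_num)
  have h8y : 8*y ≤ 2 * y^((4:ℝ)/3) := by
    rw [h43]
    nlinarith
  have hp_le : p ≤ Real.exp (-(8*y)) := Real.exp_le_exp.mpr (by linarith)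
  have hexp8y : Real.exp (8*y) = (Δ:ℝ)^(8:ℕ) := by
    rw [show (8:ℝ)*y = ((8:ℕ):ℝ)*y by norm_num, Real.exp_nat_mul, Real.exp_log hΔ0]
  have hp8 : p ≤ 1/8 := by
    calc p ≤ Real.exp (-(8*y)) := hp_le
      _ = ((Δ:ℝ)^(8:ℕ))⁻¹ := by rw [Real.exp_neg, hexp8y]
      _ ≤ 1/8 := by
          rw [one_div]
          apply inv_anti₀ (by norm_num)
          calc (8:ℝ) ≤ 2^(8:ℕ) := by norm_num
            _ ≤ (Δ:ℝ)^(8:ℕ) := pow_le_pow_left₀ (by norm_num) hΔ2 8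
  have hΔlog : y^4 ≤ (Δ:ℝ) := by rw [hy]; exact log_le_poly hΔR
  -- comparisons of exponents
  have hy43_le_Δ13 : y^((4:ℝ)/3) ≤ (Δ:ℝ)^((1:ℝ)/3) := by
    have h1 : y^((4:ℝ)/3) = (y^(4:ℕ))^((1:ℝ)/3) := by
      rw [← Real.rpow_natCast y 4, ← Real.rpow_mul hy0.le]
      norm_num
    rw [h1]
    exact Real.rpow_le_rpow (pow_nonneg hy0.le 4) hΔlog (by norm_num)
  have hy43_le_d13 : y^((4:ℝ)/3) ≤ d^((1:ℝ)/3) := by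
    have h1 : y^((4:ℝ)/3) = (y^(4:ℕ))^((1:ℝ)/3) := by
      rw [← Real.rpow_natCast y 4, ← Real.rpow_mul hy0.le]
      norm_num
    rw [h1]
    exact Real.rpow_le_rpow (pow_nonneg hy0.le 4) hd'.le (by norm_num)
  have hexp_arg : ∀ x : ℝ, 0 < x → -(2 * (x^((2:ℝ)/3))^(2:ℕ) / x) = -(2 * x^((1:ℝ)/3)) := by
    intro x hx
    have h1 : (x^((2:ℝ)/3))^(2:ℕ) = x^((4:ℝ)/3) := by
      rw [← Real.rpow_natCast (x^((2:ℝ)/3)) 2, ← Real.rpow_mul hx.le]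
      norm_num
    have h2 : x^((4:ℝ)/3) / x = x^((1:ℝ)/3) := by
      rw [div_eq_iff (ne_of_gt hx)]
      have hh : x^((1:ℝ)/3) * x = x^((4:ℝ)/3) := by
        nth_rewrite 2 [← Real.rpow_one x]
        rw [← Real.rpow_add hx]
        norm_num
      rw [hh]
    rw [h1, mul_div_assoc, h2]
  -- case s = 0
  rcases Nat.eq_zero_or_pos s with hs | hs
  · subst hs
    have hVempty : ∀ v : V, False := by
      intro v
      obtain ⟨i, hi, -⟩ := huniq v
      have h0 : (P i).ncard = 0 := by rw [hsize i]
      have : P i = ∅ := (Set.ncard_eq_zero (Set.toFinite _)).mp h0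
      rw [this] at hi
      exact hi
    refine ⟨fun _ => ∅, fun i => by simp, fun i => by simp, ?_, ?_⟩
    · exact fun v _ => (hVempty v).elim
    · exact fun v _ => (hVempty v).elim
  -- main case
  haveI : Fintype V := Fintype.ofFinite V
  haveI : DecidableEq V := Classical.decEq V
  haveI : DecidableEq ι := Classical.decEq ι
  haveI : DecidableRel G.Adj := fun _ _ => Classical.propDecidable _
  choose part hmem using fun v => huniq v
  have hpartmem : ∀ v, v ∈ P (part v) := fun v => (hmem v).1
  have hpartuniq : ∀ v i, v ∈ P i → i = part v := fun v i h => (hmem v).2 i h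
  have hfiber : ∀ i v, v ∈ P i ↔ part v = i := by
    intro i v
    constructor
    · exact fun h => (hpartuniq v i h).symm
    · intro h; rw [← h]; exact hpartmem v
  -- ι is finite
  have hPne : ∀ i, (P i).Nonempty := by
    intro i
    apply Set.nonempty_of_ncard_ne_zero
    rw [hsize i]
    omega
  choose rep hrep using hPne
  have hrepinj : Function.Injective rep := by
    intro i j h
    have h1 := hpartuniq _ _ (hrep i)
    have h2 := hpartuniq _ _ (hrep j)
    rw [h, ← h2] at h1
    exact h1
  haveI : Fintype ι := Fintype.ofInjective rep hrepinj
  -- fiber Finsets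
  set fiberF : ι → Finset V := fun i => Finset.univ.filter (fun v => part v = i) with hfiberF
  have hfibercard : ∀ i, (fiberF i).card = 2*s := by
    intro i
    have h1 := hsize i
    have hset : P i = ↑(fiberF i) := by
      ext v
      simp only [hfiberF, Finset.coe_filter, Finset.mem_univ, true_and, Set.mem_setOf_eq]
      exact hfiber i v
    rw [hset, Set.ncard_coe_finset] at h1
    exact h1
  have hfibertype : ∀ i, Fintype.card {v // part v = i} = 2*s := by
    intro i
    rw [Fintype.card_subtype]
    exact hfibercard i
  -- the pairing structure via an equivalence
  have he : ∀ i : ι, Nonempty ({v // part v = i} ≃ Fin (2*s)) :=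
    fun i => ⟨Fintype.equivFinOfCardEq (hfibertype i)⟩
  set e : ∀ i : ι, {v // part v = i} ≃ Fin (2*s) := fun i => (he i).some with hee
  set Φ : V ≃ ι × Fin (2*s) :=
    ((Equiv.sigmaFiberEquiv part).symm.trans (Equiv.sigmaCongrRight e)).trans
      (Equiv.sigmaEquivProd ι (Fin (2*s))) with hΦdef
  have hΦ1 : ∀ v, (Φ v).1 = part v := by
    intro v
    simp [hΦdef, Equiv.sigmaFiberEquiv, Equiv.sigmaCongrRight, Equiv.sigmaEquivProd]
  have hΦ2 : ∀ q : ι × Fin (2*s), part (Φ.symm q) = q.1 := by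
    intro q
    have h := hΦ1 (Φ.symm q)
    rw [Equiv.apply_symm_apply] at h
    exact h.symm
  -- the flip on Fin (2*s)
  set flip : Fin (2*s) → Fin (2*s) := fun k =>
    if h : (k:ℕ) < s then ⟨(k:ℕ) + s, by omega⟩ else ⟨(k:ℕ) - s, by have := k.2; omega⟩
    with hflipdef
  have hflipval : ∀ k : Fin (2*s), ((flip k : Fin (2*s)) : ℕ)
      = if (k:ℕ) < s then (k:ℕ) + s else (k:ℕ) - s := by
    intro k
    rw [hflipdef]
    dsimp only
    by_cases h : (k:ℕ) < s
    · rw [dif_pos h, if_pos h]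
    · rw [dif_neg h, if_neg h]
  have hflip2 : ∀ k, flip (flip k) = k := by
    intro k
    have hk := k.2
    apply Fin.ext
    by_cases h : (k:ℕ) < s
    · have h1 : ((flip k : Fin (2*s)) : ℕ) = (k:ℕ) + s := by rw [hflipval, if_pos h]
      rw [hflipval, h1, if_neg (by omega)]
      omega
    · have h1 : ((flip k : Fin (2*s)) : ℕ) = (k:ℕ) - s := by rw [hflipval, if_neg h]
      rw [hflipval, h1, if_pos (by omega)]
      omega
  have hflipside : ∀ k : Fin (2*s), ((k:ℕ) < s) ↔ ¬(((flip k : Fin (2*s)):ℕ) < s) := by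
    intro k
    have hk := k.2
    rw [hflipval]
    by_cases h : (k:ℕ) < s
    · rw [if_pos h]; constructor
      · intro _; omega
      · intro _; exact h
    · rw [if_neg h]; constructor
      · intro h'; exact absurd h' h
      · intro h'; omega
  -- pairing involution f and left set A
  set f : V → V := fun v => Φ.symm ((Φ v).1, flip (Φ v).2) with hfdef
  set A : Finset V := Finset.univ.filter (fun v => ((Φ v).2 : ℕ) < s) with hAdef
  have hΦf : ∀ v, Φ (f v) = ((Φ v).1, flip (Φ v).2) := by
    intro v
    rw [hfdef]
    exact Φ.apply_symm_apply _
  have hf2 : ∀ v, f (f v) = v := by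
    intro v
    have h1 : f (f v) = Φ.symm ((Φ (f v)).1, flip (Φ (f v)).2) := rfl
    rw [h1, hΦf v]
    simp only [hflip2]
    exact Φ.symm_apply_apply v
  have hfA : ∀ v, v ∈ A ↔ f v ∉ A := by
    intro v
    simp only [hAdef, Finset.mem_filter, Finset.mem_univ, true_and, hΦf v]
    exact hflipside ((Φ v).2)
  have hpartf : ∀ v, part (f v) = part v := by
    intro v
    rw [hfdef, hΦ2]
    exact (hΦ1 v)
  -- A ∩ fiber has cardinality s
  have hAfiber : ∀ i, (fiberF i ∩ A).card = s := by
    intro i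
    have hcard : (fiberF i ∩ A).card = (Finset.univ : Finset (Fin s)).card := by
      apply Finset.card_nbij'
        (fun v => if h : ((Φ v).2 : ℕ) < s then (⟨((Φ v).2 : ℕ), h⟩ : Fin s) else ⟨0, hs⟩)
        (fun k => Φ.symm (i, ⟨(k : ℕ), by have := k.2; omega⟩))
      · intro v _
        exact Finset.mem_univ _
      · intro k _
        simp only [hfiberF, Finset.mem_coe, Finset.mem_inter, Finset.mem_filter, Finset.mem_univ, true_and,
          hAdef]
        refine ⟨hΦ2 _, ?_⟩
        rw [Equiv.apply_symm_apply]
        have := k.2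
        simpa using this
      · intro v hv
        simp only [hfiberF, Finset.mem_coe, Finset.mem_inter, Finset.mem_filter, Finset.mem_univ, true_and,
          hAdef] at hv
        dsimp only
        rw [dif_pos hv.2]
        rw [Equiv.symm_apply_eq]
        have h1 : (Φ v).1 = i := by rw [hΦ1 v, hv.1]
        have h2 : Φ v = (i, ⟨((Φ v).2 : ℕ), by have := ((Φ v).2).2; omega⟩) := by
          apply Prod.ext
          · exact h1
          · apply Fin.ext
            simp
        exact h2.symm
      · intro k _
        dsimp only
        rw [Equiv.apply_symm_apply]
        have hlt : ((⟨(k:ℕ), by have := k.2; omega⟩ : Fin (2*s)) : ℕ) < s := k.2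
        rw [dif_pos hlt]
    rw [hcard, Finset.card_univ, Fintype.card_fin]
  -- neighbor finsets
  haveI : LinearOrder V := LinearOrder.lift' (fun v => ((Fintype.equivFin V) v : ℕ))
    (fun a b h => (Fintype.equivFin V).injective (Fin.ext h))
  set Nv : V → Finset V := fun v => Finset.univ.filter (fun u => G.Adj v u) with hNvdef
  have hNvSet : ∀ v, G.neighborSet v = ↑(Nv v) := by
    intro v
    ext u
    simp [hNvdef]
  have hNvcardN : ∀ v, (Nv v).card ≤ Δ := by
    intro v
    have h := hdeg v
    rwa [hNvSet v, Set.ncard_coe_finset] at h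
  have hNvcard : ∀ v, ((Nv v).card : ℝ) ≤ (Δ:ℝ) := fun v => by exact_mod_cast hNvcardN v
  have hNvP : ∀ (v : V) (i : ι), v ∉ P i → (((Nv v ∩ fiberF i).card : ℝ)) ≤ d := by
    intro v i hvi
    have h1 := hlocdeg v i hvi
    have h2 : G.neighborSet v ∩ P i = ↑(Nv v ∩ fiberF i) := by
      ext u
      simp [hNvSet v, hfiberF, hfiber i u]
    rwa [h2, Set.ncard_coe_finset] at h1
  -- canonical representatives
  set crep : V → V := fun w => (fiberF (part w)).min' ⟨w, by simp [hfiberF]⟩ with hcrepdef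
  have hcrepmem : ∀ w, crep w ∈ fiberF (part w) := fun w => Finset.min'_mem _ _
  have hcreppart : ∀ w, part (crep w) = part w := by
    intro w
    have h := hcrepmem w
    simp only [hfiberF, Finset.mem_filter] at h
    exact h.2
  have hcrepeq : ∀ w w' : V, part w = part w' → crep w = crep w' := by
    intro w w' h
    have hset : fiberF (part w) = fiberF (part w') := by rw [h]
    apply le_antisymm
    · apply Finset.min'_le
      rw [hset]
      exact Finset.min'_mem _ _
    · apply Finset.min'_le
      rw [← hset]
      exact Finset.min'_mem _ _
  -- events
  set vblN : Finset V → Finset V := fun N => A.filter (fun a => a ∈ N ∨ f a ∈ N) with hvblNdef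
  set EvG : V → Finset (V → Bool) := fun v =>
    Finset.univ.filter (fun ω => (Δ:ℝ)/2 + (Δ:ℝ)^((2:ℝ)/3) < (cnt A f (Nv v) ω : ℝ)) with hEvG
  set EvL : V × V → Finset (V → Bool) := fun q =>
    if part q.1 ≠ part q.2 ∧ q.2 = crep q.2 then
      Finset.univ.filter
        (fun ω => d/2 + d^((2:ℝ)/3) < (cnt A f (Nv q.1 ∩ fiberF (part q.2)) ω : ℝ))
    else ∅ with hEvL
  set Ev : V ⊕ V × V → Finset (V → Bool) := Sum.elim EvG EvL with hEv
  set vbl : V ⊕ V × V → Finset V := Sum.elim (fun v => vblN (Nv v))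
    (fun q => if part q.1 ≠ part q.2 ∧ q.2 = crep q.2 then
      vblN (Nv q.1 ∩ fiberF (part q.2)) else ∅) with hvbl
  -- determinedness
  have hdetN : ∀ (N : Finset V) (θ : ℝ),
      detBy (vblN N) (Finset.univ.filter (fun ω => θ < (cnt A f N ω : ℝ))) := by
    intro N θ ω ω' hag hω
    simp only [Finset.mem_filter, Finset.mem_univ, true_and] at hω ⊢
    rw [← cnt_agree A f N ω ω' (fun r hr => hag r hr)]
    exact hω
  have hdet : ∀ j, detBy (vbl j) (Ev j) := by
    intro j
    rcases j with v | q
    · exact hdetN (Nv v) _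
    · simp only [hvbl, hEv, Sum.elim_inr, hEvL]
      split_ifs with h
      · exact hdetN _ _
      · intro ω ω' _ hω
        simp at hω
  -- probability bounds
  have hpow2pos : (0:ℝ) < 2 ^ (Fintype.card V) := by positivity
  have hcardEv : ∀ j, ((Ev j).card : ℝ) ≤ p * 2 ^ (Fintype.card V) := by
    intro j
    rcases j with v | q
    · have hch := chernoff_bound A f hf2 hfA (Nv v) (Δ:ℝ) ((Δ:ℝ)^((2:ℝ)/3))
        ((Δ:ℝ)/2 + (Δ:ℝ)^((2:ℝ)/3)) (hNvcard v) hΔ0 (Real.rpow_pos_of_pos hΔ0 _) le_rfl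
      calc ((Ev (Sum.inl v)).card : ℝ)
          ≤ Real.exp (-(2*((Δ:ℝ)^((2:ℝ)/3))^2/(Δ:ℝ))) * 2 ^ (Fintype.card V) := hch
        _ ≤ p * 2 ^ (Fintype.card V) := by
            apply mul_le_mul_of_nonneg_right _ hpow2pos.le
            rw [hexp_arg (Δ:ℝ) hΔ0, hp]
            apply Real.exp_le_exp.mpr
            nlinarith [hy43_le_Δ13]
    · simp only [hEv, Sum.elim_inr, hEvL]
      split_ifs with h
      · have hvq : q.1 ∉ P (part q.2) := by
          intro hc
          exact h.1 (hpartuniq _ _ hc).symm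
        have hch := chernoff_bound A f hf2 hfA (Nv q.1 ∩ fiberF (part q.2)) d (d^((2:ℝ)/3))
          (d/2 + d^((2:ℝ)/3)) (hNvP q.1 (part q.2) hvq) hd0 (Real.rpow_pos_of_pos hd0 _) le_rfl
        calc _ ≤ Real.exp (-(2*(d^((2:ℝ)/3))^2/d)) * 2 ^ (Fintype.card V) := hch
          _ ≤ p * 2 ^ (Fintype.card V) := by
              apply mul_le_mul_of_nonneg_right _ hpow2pos.le
              rw [hexp_arg d hd0, hp]
              apply Real.exp_le_exp.mpr
              nlinarith [hy43_le_d13]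
      · simp only [Finset.card_empty, Nat.cast_zero]
        positivity
  -- dependency bound
  have hvblcard : ∀ j, (vbl j).card ≤ Δ := by
    intro j
    rcases j with v | q
    · exact le_trans (card_AN_le A f hf2 hfA (Nv v)) (hNvcardN v)
    · simp only [hvbl, Sum.elim_inr]
      split_ifs with h
      · exact le_trans (card_AN_le A f hf2 hfA _)
          (le_trans (Finset.card_le_card Finset.inter_subset_left) (hNvcardN q.1))
      · simp
  have hmemvbl : ∀ (j) (r : V), r ∈ vbl j →
      ∃ u ∈ Nv r ∪ Nv (f r), j = Sum.inl u ∨ j = Sum.inr (u, crep r) := by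
    intro j r hr
    rcases j with v | q
    · simp only [hvbl, Sum.elim_inl, hvblNdef, Finset.mem_filter] at hr
      rcases hr.2 with h | h
      · refine ⟨v, ?_, Or.inl rfl⟩
        rw [Finset.mem_union]
        left
        simp only [hNvdef, Finset.mem_filter, Finset.mem_univ, true_and] at h ⊢
        exact G.adj_symm h
      · refine ⟨v, ?_, Or.inl rfl⟩
        rw [Finset.mem_union]
        right
        simp only [hNvdef, Finset.mem_filter, Finset.mem_univ, true_and] at h ⊢
        exact G.adj_symm h
    · simp only [hvbl, Sum.elim_inr] at hr
      split_ifs at hr with hcond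
      swap
      · simp at hr
      simp only [hvblNdef, Finset.mem_filter, Finset.mem_inter] at hr
      have hpartq : part q.2 = part r ∧ q.1 ∈ Nv r ∪ Nv (f r) := by
        rcases hr.2 with ⟨h1, h2⟩ | ⟨h1, h2⟩
        · constructor
          · simp only [hfiberF, Finset.mem_filter] at h2
            exact h2.2.symm
          · rw [Finset.mem_union]
            left
            simp only [hNvdef, Finset.mem_filter, Finset.mem_univ, true_and] at h1 ⊢
            exact G.adj_symm h1
        · constructor
          · simp only [hfiberF, Finset.mem_filter] at h2
            rw [← h2.2, hpartf r]
          · rw [Finset.mem_union]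
            right
            simp only [hNvdef, Finset.mem_filter, Finset.mem_univ, true_and] at h1 ⊢
            exact G.adj_symm h1
      refine ⟨q.1, hpartq.2, Or.inr ?_⟩
      have hq2 : q.2 = crep r := by
        rw [hcond.2]
        exact hcrepeq q.2 r hpartq.1
      rw [← hq2]
  have hdep : ∀ j, ((Finset.univ.filter
      (fun b => ¬ Disjoint (vbl j) (vbl b))).card) ≤ 4*Δ*Δ := by
    intro j
    have hsub : Finset.univ.filter (fun b => ¬ Disjoint (vbl j) (vbl b))
        ⊆ (vbl j).biUnion (fun r => ((Nv r ∪ Nv (f r)).image Sum.inl)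
          ∪ ((Nv r ∪ Nv (f r)).image (fun u => Sum.inr (u, crep r)))) := by
      intro b hb
      rw [Finset.mem_filter] at hb
      obtain ⟨r, hr1, hr2⟩ := Finset.not_disjoint_iff.mp hb.2
      apply Finset.mem_biUnion.mpr
      refine ⟨r, hr1, ?_⟩
      obtain ⟨u, hu, hcase⟩ := hmemvbl b r hr2
      rw [Finset.mem_union]
      rcases hcase with rfl | rfl
      · exact Or.inl (Finset.mem_image_of_mem _ hu)
      · exact Or.inr (Finset.mem_image_of_mem _ hu)
    have hper : ∀ r : V, (((Nv r ∪ Nv (f r)).image Sum.inl)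
        ∪ ((Nv r ∪ Nv (f r)).image (fun u => (Sum.inr (u, crep r) : V ⊕ V × V)))).card
        ≤ 4 * Δ := by
      intro r
      have h1 : (Nv r ∪ Nv (f r)).card ≤ 2*Δ := by
        calc (Nv r ∪ Nv (f r)).card ≤ (Nv r).card + (Nv (f r)).card := Finset.card_union_le _ _
          _ ≤ 2*Δ := by have := hNvcardN r; have := hNvcardN (f r); omega
      calc _ ≤ ((Nv r ∪ Nv (f r)).image Sum.inl).card
            + ((Nv r ∪ Nv (f r)).image (fun u => (Sum.inr (u, crep r) : V ⊕ V × V))).card :=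
            Finset.card_union_le _ _
        _ ≤ (Nv r ∪ Nv (f r)).card + (Nv r ∪ Nv (f r)).card := by
            have := Finset.card_image_le (s := Nv r ∪ Nv (f r)) (f := Sum.inl (β := V × V))
            have := Finset.card_image_le (s := Nv r ∪ Nv (f r))
              (f := fun u => (Sum.inr (u, crep r) : V ⊕ V × V))
            omega
        _ ≤ 4 * Δ := by omega
    calc (Finset.univ.filter (fun b => ¬ Disjoint (vbl j) (vbl b))).card
        ≤ ((vbl j).biUnion _).card := Finset.card_le_card hsub
      _ ≤ ∑ r ∈ vbl j, (((Nv r ∪ Nv (f r)).image Sum.inl)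
          ∪ ((Nv r ∪ Nv (f r)).image (fun u => (Sum.inr (u, crep r) : V ⊕ V × V)))).card :=
          Finset.card_biUnion_le
      _ ≤ ∑ _r ∈ vbl j, 4*Δ := Finset.sum_le_sum (fun r _ => hper r)
      _ = (vbl j).card * (4*Δ) := by rw [Finset.sum_const, smul_eq_mul]
      _ ≤ Δ * (4*Δ) := Nat.mul_le_mul_right _ (hvblcard j)
      _ = 4*Δ*Δ := by ring
  -- LLL condition
  have hpD : 4 * p * ((4*Δ*Δ : ℕ) : ℝ) ≤ 1 := by
    have h1 : ((4*Δ*Δ : ℕ) : ℝ) = 4*(Δ:ℝ)*(Δ:ℝ) := by push_cast; ring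
    rw [h1]
    have h2 : p ≤ ((Δ:ℝ)^(8:ℕ))⁻¹ := le_trans hp_le (le_of_eq (by rw [Real.exp_neg, hexp8y]))
    have hΔ8 : (0:ℝ) < (Δ:ℝ)^(8:ℕ) := by positivity
    have h64 : (64:ℝ) ≤ (Δ:ℝ)^(6:ℕ) := by
      calc (64:ℝ) = 2^(6:ℕ) := by norm_num
        _ ≤ (Δ:ℝ)^(6:ℕ) := pow_le_pow_left₀ (by norm_num) hΔ2 6
    have hkey : 16*(Δ:ℝ)^(2:ℕ) ≤ (Δ:ℝ)^(8:ℕ) := by nlinarith [sq_nonneg (Δ:ℝ)]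
    calc 4 * p * (4*(Δ:ℝ)*(Δ:ℝ)) = (16*(Δ:ℝ)^(2:ℕ)) * p := by ring
      _ ≤ (16*(Δ:ℝ)^(2:ℕ)) * ((Δ:ℝ)^(8:ℕ))⁻¹ := by
          apply mul_le_mul_of_nonneg_left h2 (by positivity)
      _ = (16*(Δ:ℝ)^(2:ℕ)) / (Δ:ℝ)^(8:ℕ) := by rw [div_eq_mul_inv]
      _ ≤ 1 := by rw [div_le_one hΔ8]; exact hkey
  -- apply the local lemma
  obtain ⟨ω, hω⟩ := lll Ev vbl hdet p hp0 hp8 (4*Δ*Δ) hcardEv hdep hpD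
  set C := chosen A f ω with hCdef
  refine ⟨fun i => ↑(fiberF i ∩ C), ?_, ?_, ?_, ?_⟩
  · intro i v hv
    simp only [Finset.coe_inter, Set.mem_inter_iff, Finset.mem_coe, hfiberF,
      Finset.mem_filter] at hv
    exact (hfiber i v).mpr hv.1.2
  · intro i
    rw [Set.ncard_coe_finset]
    rw [chosen_inter_card A f hf2 hfA (fiberF i) (fun v => by
      simp only [hfiberF, Finset.mem_filter, Finset.mem_univ, true_and, hpartf]) ω]
    exact hAfiber i
  · intro v _
    have hUnion : (⋃ i, ((fiberF i ∩ C : Finset V) : Set V)) = ↑C := by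
      ext u
      simp only [Set.mem_iUnion, Finset.coe_inter, Set.mem_inter_iff, Finset.mem_coe]
      constructor
      · rintro ⟨i, _, h2⟩
        exact h2
      · intro h
        exact ⟨part u, by simp [hfiberF], h⟩
    rw [hUnion]
    have hev := hω (Sum.inl v)
    simp only [hEv, Sum.elim_inl, hEvG, Finset.mem_filter, Finset.mem_univ, true_and,
      not_lt] at hev
    have hset : G.neighborSet v ∩ ↑C = ↑(Nv v ∩ C) := by
      rw [hNvSet v, Finset.coe_inter]
    rw [hset, Set.ncard_coe_finset, ← cnt_eq_card A f hf2 hfA (Nv v) ω]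
    exact hev
  · intro v _ i hvPi
    by_cases hfib : ∃ w : V, part w = i
    · obtain ⟨w₀, hw₀⟩ := hfib
      set w := crep w₀ with hwdef
      have hpw : part w = i := by rw [hwdef, hcreppart w₀, hw₀]
      have hcond : part v ≠ part w ∧ w = crep w := by
        constructor
        · rw [hpw]
          intro hc
          exact hvPi ((hfiber i v).mpr hc)
        · rw [hwdef]
          exact (hcrepeq (crep w₀) w₀ (hcreppart w₀)).symm
      have hev := hω (Sum.inr (v, w))
      simp only [hEv, Sum.elim_inr, hEvL] at hev
      rw [if_pos hcond] at hev
      simp only [Finset.mem_filter, Finset.mem_univ, true_and, not_lt] at hev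
      have hset : G.neighborSet v ∩ ↑(fiberF i ∩ C) = ↑(Nv v ∩ fiberF (part w) ∩ C) := by
        rw [hpw, hNvSet v]
        ext u
        simp only [Set.mem_inter_iff, Finset.coe_inter, Finset.mem_coe, Finset.mem_inter]
        tauto
      rw [hset, Set.ncard_coe_finset, ← cnt_eq_card A f hf2 hfA _ ω]
      exact hev
    · push_neg at hfib
      have hfibempty : fiberF i = ∅ := by
        rw [hfiberF]
        apply Finset.eq_empty_of_forall_notMem
        intro u hu
        simp only [Finset.mem_filter, Finset.mem_univ, true_and] at hu
        exact hfib u hu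
      have hzero : G.neighborSet v ∩ ↑(fiberF i ∩ C) = ∅ := by
        rw [hfibempty]
        simp
      rw [hzero]
      simp only [Set.ncard_empty, Nat.cast_zero]
      have : (0:ℝ) < d ^ ((2:ℝ)/3) := Real.rpow_pos_of_pos hd0 _
      linarith
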